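/- Let θ ∈ (0,π) and C' ∈ ℝ, and let I ⊆ (0,∞) be an interval on which t² + C' > 0 for all t ∈ I. Then each of the two functions H₊(t) = t·cot θ + √((cot²θ + 1)(t² + C')) and H₋(t) = t·cot θ − √((cot²θ + 1)(t² + C')) is differentiable on I, satisfies H(t)·sin θ − t·cos θ ≠ 0 on I, and solves the ODE H'(t) = (t·sin θ + H(t)·cos θ)/(H(t)·sin θ − t·cos θ) on I. -/

import Mathlib

/-- The two explicit branches `H₊`, `H₋` (corresponding to `ε = 1` and `ε = -1`)
solve the dHYM ODE `H' = (t sin θ + H cos θ)/(H sin θ - t cos θ)` on any interval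
`I ⊆ (0,∞)` on which `t² + C' > 0`. -/
theorem dHYM_ode_explicit_solutions (θ C' : ℝ) (hθ : θ ∈ Set.Ioo 0 Real.pi)
    (I : Set ℝ) (hI : I ⊆ Set.Ioi (0 : ℝ)) (hconn : I.OrdConnected)
    (hpos : ∀ t ∈ I, 0 < t ^ 2 + C')
    (ε : ℝ) (hε : ε = 1 ∨ ε = -1)
    (H : ℝ → ℝ)
    (hH : H = fun t => t * Real.cot θ
      + ε * Real.sqrt ((Real.cot θ ^ 2 + 1) * (t ^ 2 + C'))) :
    ∀ t ∈ I, (H t * Real.sin θ - t * Real.cos θ ≠ 0) ∧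
      HasDerivAt H
        ((t * Real.sin θ + H t * Real.cos θ) / (H t * Real.sin θ - t * Real.cos θ)) t := by
  intro t ht
  have hs : 0 < Real.sin θ := Real.sin_pos_of_pos_of_lt_pi hθ.1 hθ.2
  have hR : 0 < t ^ 2 + C' := hpos t ht
  set s := Real.sin θ with hsdef
  set c := Real.cos θ with hcdef
  have hs0 : s ≠ 0 := ne_of_gt hs
  have hcot : Real.cot θ = c / s := Real.cot_eq_cos_div_sin θ
  have hpyth : c ^ 2 + s ^ 2 = 1 := by
    rw [hsdef, hcdef]; exact Real.cos_sq_add_sin_sq θ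
  have hK : Real.cot θ ^ 2 + 1 = 1 / s ^ 2 := by
    rw [hcot]; field_simp; linarith [hpyth]
  have hKpos : (0:ℝ) < Real.cot θ ^ 2 + 1 := by rw [hK]; positivity
  set q := Real.sqrt (t ^ 2 + C') with hqdef
  have hq : 0 < q := Real.sqrt_pos.mpr hR
  have hq0 : q ≠ 0 := ne_of_gt hq
  have hq2 : q ^ 2 = t ^ 2 + C' := Real.sq_sqrt hR.le
  have hsqrtK : Real.sqrt (Real.cot θ ^ 2 + 1) = 1 / s := by
    rw [hK, show (1:ℝ)/s^2 = (1/s)^2 by ring]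
    exact Real.sqrt_sq (by positivity)
  have hsq : Real.sqrt ((Real.cot θ ^ 2 + 1) * (t ^ 2 + C')) = q / s := by
    rw [Real.sqrt_mul hKpos.le, hsqrtK, hqdef]; ring
  have hHt : H t = t * (c / s) + ε * (q / s) := by
    rw [hH]; simp only []; rw [hsq, hcot]
  have hE2 : ε ^ 2 = 1 := by rcases hε with h | h <;> rw [h] <;> norm_num
  have hε2 : ε * ε = 1 := by rcases hε with h | h <;> rw [h] <;> norm_num
  have hε0 : ε ≠ 0 := by rcases hε with h | h <;> rw [h] <;> norm_num
  have hden : H t * s - t * c = ε * q := by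
    rw [hHt]; field_simp; ring
  refine ⟨by rw [hden]; exact mul_ne_zero hε0 hq0, ?_⟩
  have hf : HasDerivAt (fun x => (Real.cot θ ^ 2 + 1) * (x ^ 2 + C'))
      ((Real.cot θ ^ 2 + 1) * (2 * t)) t := by
    have := ((hasDerivAt_pow 2 t).add_const C').const_mul (Real.cot θ ^ 2 + 1)
    simpa using this
  have hfx : (Real.cot θ ^ 2 + 1) * (t ^ 2 + C') ≠ 0 :=
    ne_of_gt (mul_pos hKpos hR)
  have hsqrt := hf.sqrt hfx
  have hderiv : HasDerivAt H
      (Real.cot θ + ε * ((Real.cot θ ^ 2 + 1) * (2 * t) /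
        (2 * Real.sqrt ((Real.cot θ ^ 2 + 1) * (t ^ 2 + C'))))) t := by
    rw [hH]
    have h1 : HasDerivAt (fun x : ℝ => x * Real.cot θ) (Real.cot θ) t := by
      simpa using (hasDerivAt_id t).mul_const (Real.cot θ)
    exact h1.add (hsqrt.const_mul ε)
  convert hderiv using 1
  rw [hden, hHt, hsq, hK, hcot]
  have e1 : 1 / s ^ 2 * (2 * t) / (2 * (q / s)) = t / (s * q) := by
    field_simp
  rw [e1]
  rw [div_eq_iff (mul_ne_zero hε0 hq0)]
  field_simp
  linear_combination t * hpyth - t * hE2
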